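/- Let $0<p<1$, $r>0$, $k\ge 0$, $l>0$, and let $x>0$ satisfy $kx+l>0$. Define $g(x,\theta):=\sup_{c\ge kx+l}\left(\frac{c^p}{p}-c\theta\right)+rx\theta$ for $\theta>0$. Then: (i) $g(x,\theta)=\frac{1-p}{p}\theta^{p/(p-1)}+rx\theta$ if $\theta^{1/(p-1)}\ge kx+l$, and $g(x,\theta)=\frac{(kx+l)^p}{p}+((r-k)x-l)\theta$ if $\theta^{1/(p-1)}\le kx+l$; (ii) $\theta\mapsto g(x,\theta)$ is convex on $(0,\infty)$; (iii) if $(r-k)x>l$, then $\theta\mapsto g(x,\theta)$ is not constant on any nondegenerate open subinterval of $(0,\infty)$. -/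

import Mathlib

open Real Set

/-- `G p u θ = sup_{c ≥ u} (c^p/p - c θ)`. -/
noncomputable def G (p u θ : ℝ) : ℝ :=
  sSup ((fun c : ℝ => c ^ p / p - c * θ) '' {c : ℝ | u ≤ c})

lemma tangent_rpow {p a c : ℝ} (hp0 : 0 < p) (hp1 : p < 1) (ha : 0 < a) (hc : 0 ≤ c) :
    c ^ p ≤ a ^ p + p * a ^ (p - 1) * (c - a) := by
  have hca : 0 ≤ c / a := div_nonneg hc ha.le
  have hs : -1 ≤ c / a - 1 := by linarith
  have h := rpow_one_add_le_one_add_mul_self hs hp0.le hp1.le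
  rw [add_sub_cancel] at h
  have h2 : (c / a) ^ p * a ^ p ≤ (1 + p * (c / a - 1)) * a ^ p :=
    mul_le_mul_of_nonneg_right h (Real.rpow_nonneg ha.le p)
  rw [← Real.mul_rpow hca ha.le, div_mul_cancel₀ _ ha.ne'] at h2
  have hap : a ^ (p - 1) = a ^ p / a := by
    rw [Real.rpow_sub ha, Real.rpow_one]
  have heq : (1 + p * (c / a - 1)) * a ^ p = a ^ p + p * (a ^ p / a) * (c - a) := by
    field_simp
  rw [hap]
  rw [heq] at h2
  linarith

lemma strictConvexOn_rpow_neg {q : ℝ} (hq : q < 0) :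
    StrictConvexOn ℝ (Ioi 0) fun x : ℝ => x ^ q := by
  apply strictConvexOn_of_deriv2_pos (convex_Ioi 0)
  · exact fun y hy => (Real.continuousAt_rpow_const y q (Or.inl (ne_of_gt hy))).continuousWithinAt
  · intro y hy
    rw [interior_Ioi] at hy
    have hy' : (0:ℝ) < y := hy
    have h1 : deriv (deriv fun x : ℝ => x ^ q) y
        = deriv (fun x : ℝ => q * x ^ (q - 1)) y := by
      apply Filter.EventuallyEq.deriv_eq
      filter_upwards [isOpen_Ioi.mem_nhds hy'] with z hz
      exact Real.deriv_rpow_const z q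
    have h2 : HasDerivAt (fun x : ℝ => x ^ (q - 1)) ((q - 1) * y ^ (q - 1 - 1)) y :=
      Real.hasDerivAt_rpow_const (Or.inl (ne_of_gt hy'))
    have h3 := (h2.const_mul q).deriv
    show 0 < deriv^[2] (fun x : ℝ => x ^ q) y
    rw [show deriv^[2] (fun x : ℝ => x ^ q) = deriv (deriv fun x : ℝ => x ^ q) from rfl,
      h1, h3]
    have hq1 : 0 < q * (q - 1) := mul_pos_of_neg_of_neg hq (by linarith)
    have hyp := Real.rpow_pos_of_pos hy' (q - 1 - 1)
    nlinarith

lemma isGreatest_G {p u θ : ℝ} (hp0 : 0 < p) (hp1 : p < 1) (hu : 0 < u) (hθ : 0 < θ) :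
    IsGreatest ((fun c : ℝ => c ^ p / p - c * θ) '' {c : ℝ | u ≤ c})
      ((max u (θ ^ (1 / (p - 1)))) ^ p / p - max u (θ ^ (1 / (p - 1))) * θ) := by
  have hp1' : p - 1 < 0 := by linarith
  set cs := θ ^ (1 / (p - 1)) with hcs_def
  have hcs : 0 < cs := Real.rpow_pos_of_pos hθ _
  have hcspow : cs ^ (p - 1) = θ := by
    rw [hcs_def, ← Real.rpow_mul hθ.le, one_div_mul_cancel hp1'.ne, Real.rpow_one]
  constructor
  · exact ⟨max u cs, show u ≤ max u cs from le_max_left _ _, rfl⟩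
  · rintro y ⟨c, hc, rfl⟩
    simp only [mem_setOf_eq] at hc
    set m := max u cs with hm_def
    have hm : 0 < m := lt_of_lt_of_le hu (le_max_left _ _)
    have hc0 : 0 < c := lt_of_lt_of_le hu hc
    have ht := tangent_rpow hp0 hp1 hm hc0.le
    have hkey : c ^ p ≤ m ^ p + p * θ * (c - m) := by
      rcases le_total u cs with h | h
      · have hme : m = cs := max_eq_right h
        have hmθ : m ^ (p - 1) = θ := by rw [hme]; exact hcspow
        rw [hmθ] at ht
        linarith
      · have hme : m = u := max_eq_left h
        have hmθ : m ^ (p - 1) ≤ θ := by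
          rw [hme, ← hcspow]
          exact Real.rpow_le_rpow_of_nonpos hcs h hp1'.le
        have hcm : m ≤ c := hme ▸ hc
        nlinarith [mul_nonneg (mul_nonneg hp0.le (sub_nonneg.2 hmθ)) (sub_nonneg.2 hcm)]
    show c ^ p / p - c * θ ≤ m ^ p / p - m * θ
    have h5 : c ^ p / p ≤ m ^ p / p + θ * (c - m) := by
      rw [div_le_iff₀ hp0]
      have hexp : (m ^ p / p + θ * (c - m)) * p = m ^ p + p * θ * (c - m) := by
        field_simp
      rw [hexp]; exact hkey
    linarith

lemma strictConvexOn_const_mul_aux {c : ℝ} {s : Set ℝ} {f : ℝ → ℝ} (hc : 0 < c)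
    (hf : StrictConvexOn ℝ s f) : StrictConvexOn ℝ s fun x => c * f x :=
  ⟨hf.1, fun x hx y hy hxy a b ha hb hab => by
    have h := hf.2 hx hy hxy ha hb hab
    simp only [smul_eq_mul] at *
    nlinarith [mul_lt_mul_of_pos_left h hc]⟩

/-- properties of `g(x,θ) = sup_{c ≥ kx+l} (c^p/p - cθ) + r x θ`:
(i) explicit formulas in the two cases, (ii) convexity in `θ` on `(0,∞)`,
(iii) if `(r-k)x > l` then `θ ↦ g(x,θ)` is not constant on any nondegenerate
open subinterval of `(0,∞)`. -/
theorem stmt_2 (p r k l x : ℝ) (hp0 : 0 < p) (hp1 : p < 1) (hr : 0 < r) (hk : 0 ≤ k)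
    (hl : 0 < l) (hx : 0 < x) (hkxl : 0 < k * x + l) :
    (∀ θ : ℝ, 0 < θ →
      (k * x + l ≤ θ ^ (1 / (p - 1)) →
        G p (k * x + l) θ + r * x * θ = (1 - p) / p * θ ^ (p / (p - 1)) + r * x * θ) ∧
      (θ ^ (1 / (p - 1)) ≤ k * x + l →
        G p (k * x + l) θ + r * x * θ = (k * x + l) ^ p / p + ((r - k) * x - l) * θ)) ∧
    ConvexOn ℝ (Ioi 0) (fun θ => G p (k * x + l) θ + r * x * θ) ∧
    ((r - k) * x > l → ∀ a b : ℝ, 0 ≤ a → a < b →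
      ∃ θ₁ ∈ Ioo a b, ∃ θ₂ ∈ Ioo a b,
        G p (k * x + l) θ₁ + r * x * θ₁ ≠ G p (k * x + l) θ₂ + r * x * θ₂) := by
  set u := k * x + l with hu_def
  have hu : 0 < u := hkxl
  have hp1' : p - 1 < 0 := by linarith
  have hG : ∀ θ : ℝ, 0 < θ →
      G p u θ = (max u (θ ^ (1 / (p - 1)))) ^ p / p - max u (θ ^ (1 / (p - 1))) * θ :=
    fun θ hθ => (isGreatest_G hp0 hp1 hu hθ).csSup_eq
  -- Part (i)
  have hi : ∀ θ : ℝ, 0 < θ →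
      (u ≤ θ ^ (1 / (p - 1)) →
        G p u θ + r * x * θ = (1 - p) / p * θ ^ (p / (p - 1)) + r * x * θ) ∧
      (θ ^ (1 / (p - 1)) ≤ u →
        G p u θ + r * x * θ = u ^ p / p + ((r - k) * x - l) * θ) := by
    intro θ hθ
    have hne : p - 1 ≠ 0 := hp1'.ne
    have hne0 : p ≠ 0 := hp0.ne'
    constructor
    · intro h
      rw [hG θ hθ, max_eq_right h]
      have e1 : (θ ^ (1 / (p - 1))) ^ p = θ ^ (p / (p - 1)) := by
        rw [← Real.rpow_mul hθ.le]
        congr 1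
        field_simp
        try ring
      have e2 : θ ^ (1 / (p - 1)) * θ = θ ^ (p / (p - 1)) := by
        nth_rewrite 2 [← Real.rpow_one θ]
        rw [← Real.rpow_add hθ]
        congr 1
        field_simp
        try ring
      rw [e1, e2]
      field_simp
    · intro h
      rw [hG θ hθ, max_eq_left h, hu_def]
      ring
  refine ⟨hi, ?_, ?_⟩
  -- Part (ii)
  · refine ⟨convex_Ioi 0, ?_⟩
    intro θ₁ hθ₁ θ₂ hθ₂ a b ha hb hab
    simp only [smul_eq_mul]
    have hθ₁' : (0:ℝ) < θ₁ := hθ₁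
    have hθ₂' : (0:ℝ) < θ₂ := hθ₂
    have hθc : 0 < a * θ₁ + b * θ₂ := by
      nlinarith [mul_le_mul_of_nonneg_left (min_le_left θ₁ θ₂) ha,
        mul_le_mul_of_nonneg_left (min_le_right θ₁ θ₂) hb, lt_min hθ₁' hθ₂']
    have hsub : G p u (a * θ₁ + b * θ₂) ≤ a * G p u θ₁ + b * G p u θ₂ := by
      refine csSup_le ⟨u ^ p / p - u * (a * θ₁ + b * θ₂), ⟨u, le_refl u, rfl⟩⟩ ?_
      rintro y ⟨c, hc, rfl⟩
      have m1 : c ^ p / p - c * θ₁ ≤ G p u θ₁ :=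
        le_csSup (isGreatest_G hp0 hp1 hu hθ₁').bddAbove ⟨c, hc, rfl⟩
      have m2 : c ^ p / p - c * θ₂ ≤ G p u θ₂ :=
        le_csSup (isGreatest_G hp0 hp1 hu hθ₂').bddAbove ⟨c, hc, rfl⟩
      calc c ^ p / p - c * (a * θ₁ + b * θ₂)
          = a * (c ^ p / p - c * θ₁) + b * (c ^ p / p - c * θ₂) := by
            linear_combination -(c ^ p / p) * hab
        _ ≤ a * G p u θ₁ + b * G p u θ₂ :=
            add_le_add (mul_le_mul_of_nonneg_left m1 ha) (mul_le_mul_of_nonneg_left m2 hb)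
    have hlin : r * x * (a * θ₁ + b * θ₂) = a * (r * x * θ₁) + b * (r * x * θ₂) := by ring
    show G p u (a * θ₁ + b * θ₂) + r * x * (a * θ₁ + b * θ₂)
        ≤ a * (G p u θ₁ + r * x * θ₁) + b * (G p u θ₂ + r * x * θ₂)
    nlinarith [hsub]
  -- Part (iii)
  · intro hrl a b ha hab
    set m0 := u ^ (p - 1) with hm0_def
    have hm0 : 0 < m0 := Real.rpow_pos_of_pos hu _
    have hinv : 1 / (p - 1) < 0 := one_div_neg.2 hp1'
    have hm0u : (u ^ (p - 1)) ^ (1 / (p - 1)) = u := by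
      rw [← Real.rpow_mul hu.le, mul_one_div_cancel hp1'.ne, Real.rpow_one]
    have f1 : ∀ θ : ℝ, 0 < θ → m0 ≤ θ →
        G p u θ + r * x * θ = u ^ p / p + ((r - k) * x - l) * θ := by
      intro θ hθ hm0θ
      refine (hi θ hθ).2 ?_
      rw [← hm0u]
      exact Real.rpow_le_rpow_of_nonpos hm0 hm0θ hinv.le
    have f2 : ∀ θ : ℝ, 0 < θ → θ ≤ m0 →
        G p u θ + r * x * θ = (1 - p) / p * θ ^ (p / (p - 1)) + r * x * θ := by
      intro θ hθ hθm0
      refine (hi θ hθ).1 ?_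
      rw [← hm0u]
      exact Real.rpow_le_rpow_of_nonpos hθ hθm0 hinv.le
    by_contra hcon
    push_neg at hcon
    have hK : 0 < (r - k) * x - l := by linarith
    rcases le_or_gt m0 a with hcase | hcase
    · -- whole interval in the linear regime
      set θ₁ := a + (b - a) / 3 with hθ₁_def
      set θ₂ := a + 2 * (b - a) / 3 with hθ₂_def
      have hd : 0 < b - a := by linarith
      have hmem₁ : θ₁ ∈ Ioo a b := ⟨by rw [hθ₁_def]; linarith, by rw [hθ₁_def]; linarith⟩
      have hmem₂ : θ₂ ∈ Ioo a b := ⟨by rw [hθ₂_def]; linarith, by rw [hθ₂_def]; linarith⟩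
      have hpos₁ : 0 < θ₁ := lt_of_lt_of_le hm0 (le_trans hcase hmem₁.1.le)
      have hpos₂ : 0 < θ₂ := lt_of_lt_of_le hm0 (le_trans hcase hmem₂.1.le)
      have e := hcon θ₁ hmem₁ θ₂ hmem₂
      rw [f1 θ₁ hpos₁ (le_trans hcase hmem₁.1.le), f1 θ₂ hpos₂ (le_trans hcase hmem₂.1.le)] at e
      have hlt : θ₁ < θ₂ := by rw [hθ₁_def, hθ₂_def]; linarith
      nlinarith [mul_lt_mul_of_pos_left hlt hK]
    · -- use strict convexity on the power regime
      have hb' : a < min b m0 := lt_min hab hcase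
      set d := (min b m0 - a) / 4 with hd_def
      have hd : 0 < d := by rw [hd_def]; linarith
      set θ₁ := a + d with hθ₁_def
      set θ₂ := a + 2 * d with hθ₂_def
      set θ₃ := a + 3 * d with hθ₃_def
      have hbm : min b m0 ≤ b := min_le_left _ _
      have hmm : min b m0 ≤ m0 := min_le_right _ _
      have hmem₁ : θ₁ ∈ Ioo a b := ⟨by rw [hθ₁_def]; linarith, by rw [hθ₁_def]; linarith⟩
      have hmem₂ : θ₂ ∈ Ioo a b := ⟨by rw [hθ₂_def]; linarith, by rw [hθ₂_def]; linarith⟩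
      have hmem₃ : θ₃ ∈ Ioo a b := ⟨by rw [hθ₃_def]; linarith, by rw [hθ₃_def]; linarith⟩
      have hpos₁ : 0 < θ₁ := by rw [hθ₁_def]; linarith
      have hpos₂ : 0 < θ₂ := by rw [hθ₂_def]; linarith
      have hpos₃ : 0 < θ₃ := by rw [hθ₃_def]; linarith
      have hle₁ : θ₁ ≤ m0 := by rw [hθ₁_def]; linarith
      have hle₂ : θ₂ ≤ m0 := by rw [hθ₂_def]; linarith
      have hle₃ : θ₃ ≤ m0 := by rw [hθ₃_def]; linarith
      set φ : ℝ → ℝ := fun θ => (1 - p) / p * θ ^ (p / (p - 1)) + r * x * θ with hφ_def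
      have e12 : φ θ₁ = φ θ₂ := by
        rw [hφ_def]
        simp only
        rw [← f2 θ₁ hpos₁ hle₁, ← f2 θ₂ hpos₂ hle₂]
        exact hcon θ₁ hmem₁ θ₂ hmem₂
      have e23 : φ θ₂ = φ θ₃ := by
        rw [hφ_def]
        simp only
        rw [← f2 θ₂ hpos₂ hle₂, ← f2 θ₃ hpos₃ hle₃]
        exact hcon θ₂ hmem₂ θ₃ hmem₃
      have hQ : p / (p - 1) < 0 := div_neg_of_pos_of_neg hp0 hp1'
      have h1 : StrictConvexOn ℝ (Ioi 0) fun θ : ℝ => (1 - p) / p * θ ^ (p / (p - 1)) :=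
        strictConvexOn_const_mul_aux (div_pos (by linarith) hp0) (strictConvexOn_rpow_neg hQ)
      have h2 : ConvexOn ℝ (Ioi 0) (fun θ : ℝ => r * x * θ) :=
        ⟨convex_Ioi 0, fun θa _ θb _ a b _ _ _ => by
          simp only [smul_eq_mul]; exact le_of_eq (by ring)⟩
      have hsc : StrictConvexOn ℝ (Ioi 0) φ := h1.add_convexOn h2
      have hne : θ₁ ≠ θ₃ := by rw [hθ₁_def, hθ₃_def]; intro h; nlinarith
      have hkey := hsc.2 (show θ₁ ∈ Ioi (0:ℝ) from hpos₁) (show θ₃ ∈ Ioi (0:ℝ) from hpos₃)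
        hne (by norm_num : (0:ℝ) < 1/2) (by norm_num : (0:ℝ) < 1/2) (by norm_num)
      simp only [smul_eq_mul] at hkey
      have hmid : (1/2 : ℝ) * θ₁ + (1/2 : ℝ) * θ₃ = θ₂ := by
        rw [hθ₁_def, hθ₂_def, hθ₃_def]; ring
      rw [hmid] at hkey
      have e12' : (1 - p) / p * θ₁ ^ (p / (p - 1)) + r * x * θ₁
          = (1 - p) / p * θ₂ ^ (p / (p - 1)) + r * x * θ₂ := e12
      have e23' : (1 - p) / p * θ₂ ^ (p / (p - 1)) + r * x * θ₂
          = (1 - p) / p * θ₃ ^ (p / (p - 1)) + r * x * θ₃ := e23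
      have hkey' : (1 - p) / p * θ₂ ^ (p / (p - 1)) + r * x * θ₂
          < 1 / 2 * ((1 - p) / p * θ₁ ^ (p / (p - 1)) + r * x * θ₁)
            + 1 / 2 * ((1 - p) / p * θ₃ ^ (p / (p - 1)) + r * x * θ₃) := hkey
      linarith
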